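/- Let T be a self-adjoint bounded operator on a Hilbert space H and let (xₙ) be a norming sequence of unit vectors for T (i.e., ‖Txₙ‖ → ‖T‖). Then for every integer k ≥ 0, ‖T^{2k+1}xₙ − ‖T‖^{2k}·Txₙ‖ → 0 as n → ∞. -/

import Mathlib

open Filter Topology

lemma key_sq_norming
    {H : Type*} [NormedAddCommGroup H] [InnerProductSpace ℂ H] [CompleteSpace H]
    (T : H →L[ℂ] H) (hT : IsSelfAdjoint T)
    (x : ℕ → H) (hx : ∀ n, ‖x n‖ = 1)
    (hnorm : Tendsto (fun n => ‖T (x n)‖) atTop (𝓝 ‖T‖)) :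
    Tendsto (fun n => ‖T (T (x n)) - (‖T‖ ^ 2 : ℝ) • x n‖) atTop (𝓝 0) := by
  have hb : Tendsto (fun n => 2 * ‖T‖ ^ 4 - 2 * ‖T‖ ^ 2 * ‖T (x n)‖ ^ 2) atTop (𝓝 0) := by
    have h2 : Tendsto (fun n => ‖T (x n)‖ ^ 2) atTop (𝓝 (‖T‖ ^ 2)) := hnorm.pow 2
    have := (tendsto_const_nhds : Tendsto (fun _ : ℕ => 2 * ‖T‖ ^ 4) atTop (𝓝 (2 * ‖T‖ ^ 4))).sub
      (h2.const_mul (2 * ‖T‖ ^ 2))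
    convert this using 2 <;> ring
  have hsq : Tendsto (fun n => ‖T (T (x n)) - (‖T‖ ^ 2 : ℝ) • x n‖ ^ 2) atTop (𝓝 0) := by
    apply squeeze_zero (fun n => sq_nonneg _) _ hb
    intro n
    have hinner : RCLike.re (inner ℂ (T (T (x n))) (x n) : ℂ) = ‖T (x n)‖ ^ 2 := by
      have h0 := ContinuousLinearMap.adjoint_inner_left T (x n) (T (x n))
      rw [hT.adjoint_eq] at h0
      rw [h0, inner_self_eq_norm_sq]
    have hTTx : ‖T (T (x n))‖ ≤ ‖T‖ ^ 2 := by
      calc ‖T (T (x n))‖ ≤ ‖T‖ * ‖T (x n)‖ := T.le_opNorm _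
        _ ≤ ‖T‖ * (‖T‖ * ‖x n‖) := by
            exact mul_le_mul_of_nonneg_left (T.le_opNorm _) (norm_nonneg _)
        _ = ‖T‖ ^ 2 := by rw [hx n]; ring
    have hTx : ‖T (x n)‖ ≤ ‖T‖ := by
      have := T.le_opNorm (x n); rwa [hx n, mul_one] at this
    have hexp := @norm_sub_sq ℂ H _ _ _ (T (T (x n))) ((‖T‖ ^ 2 : ℝ) • x n)
    rw [RCLike.real_smul_eq_coe_smul (K := ℂ), inner_smul_right] at hexp
    simp only [RCLike.conj_ofReal, RCLike.mul_re, RCLike.ofReal_re, RCLike.ofReal_im,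
      zero_mul, sub_zero] at hexp
    simp only [← RCLike.real_smul_eq_coe_smul (K := ℂ)] at hexp
    rw [hexp]
    have hns : ‖(‖T‖ ^ 2 : ℝ) • x n‖ = ‖T‖ ^ 2 := by
      rw [norm_smul, hx n]; simp [abs_of_nonneg (sq_nonneg ‖T‖)]
    rw [hns, hinner]
    nlinarith [norm_nonneg (T (T (x n))), norm_nonneg T, norm_nonneg (T (x n))]
  have hcont := (Real.continuous_sqrt.tendsto 0).comp hsq
  rw [Real.sqrt_zero] at hcont
  exact hcont.congr fun n => Real.sqrt_sq (norm_nonneg _)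

/-- For a self-adjoint operator `T` and a norming sequence of `T`,
`‖T^{2k+1} xₙ - ‖T‖^{2k} T xₙ‖ → 0` for every `k ≥ 0`. -/
theorem selfAdjoint_odd_power_norming
    {H : Type*} [NormedAddCommGroup H] [InnerProductSpace ℂ H] [CompleteSpace H]
    (T : H →L[ℂ] H) (hT : IsSelfAdjoint T)
    (x : ℕ → H) (hx : ∀ n, ‖x n‖ = 1)
    (hnorm : Tendsto (fun n => ‖T (x n)‖) atTop (𝓝 ‖T‖)) :
    ∀ k : ℕ,
      Tendsto (fun n => ‖(T ^ (2 * k + 1)) (x n) - (‖T‖ ^ (2 * k) : ℝ) • T (x n)‖)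
        atTop (𝓝 0) := by
  have key := key_sq_norming T hT x hx hnorm
  intro k
  induction k with
  | zero => simp
  | succ k ih =>
      have hg : Tendsto (fun n =>
          ‖T‖ ^ 2 * ‖(T ^ (2 * k + 1)) (x n) - (‖T‖ ^ (2 * k) : ℝ) • T (x n)‖
          + ‖T‖ ^ (2 * k) * (‖T‖ * ‖T (T (x n)) - (‖T‖ ^ 2 : ℝ) • x n‖))
          atTop (𝓝 0) := by
        have := (ih.const_mul (‖T‖ ^ 2)).add ((key.const_mul ‖T‖).const_mul (‖T‖ ^ (2 * k)))
        simpa using this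
      apply squeeze_zero (fun n => norm_nonneg _) _ hg
      intro n
      have hpow : (T ^ (2 * (k + 1) + 1)) (x n) = (T ^ 2) ((T ^ (2 * k + 1)) (x n)) := by
        have : T ^ (2 * (k + 1) + 1) = T ^ 2 * T ^ (2 * k + 1) := by
          rw [← pow_add]; ring_nf
        rw [this]; rfl
      have hsq2 : ∀ v : H, (T ^ 2) v = T (T v) := fun v => by
        rw [sq]; rfl
      have hid : (T ^ (2 * (k + 1) + 1)) (x n) - (‖T‖ ^ (2 * (k + 1)) : ℝ) • T (x n)
          = (T ^ 2) ((T ^ (2 * k + 1)) (x n) - (‖T‖ ^ (2 * k) : ℝ) • T (x n))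
            + (‖T‖ ^ (2 * k) : ℝ) • (T (T (T (x n)) - (‖T‖ ^ 2 : ℝ) • x n)) := by
        rw [hpow, map_sub, map_sub, ContinuousLinearMap.map_smul_of_tower, ContinuousLinearMap.map_smul_of_tower, hsq2, hsq2, smul_sub, smul_smul]
        have : ‖T‖ ^ (2 * k) * ‖T‖ ^ 2 = ‖T‖ ^ (2 * (k + 1)) := by rw [← pow_add]; ring_nf
        rw [this]
        abel
      rw [hid]
      calc ‖(T ^ 2) ((T ^ (2 * k + 1)) (x n) - (‖T‖ ^ (2 * k) : ℝ) • T (x n))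
            + (‖T‖ ^ (2 * k) : ℝ) • (T (T (T (x n)) - (‖T‖ ^ 2 : ℝ) • x n))‖
          ≤ ‖(T ^ 2) ((T ^ (2 * k + 1)) (x n) - (‖T‖ ^ (2 * k) : ℝ) • T (x n))‖
            + ‖(‖T‖ ^ (2 * k) : ℝ) • (T (T (T (x n)) - (‖T‖ ^ 2 : ℝ) • x n))‖ :=
            norm_add_le _ _
        _ ≤ ‖T‖ ^ 2 * ‖(T ^ (2 * k + 1)) (x n) - (‖T‖ ^ (2 * k) : ℝ) • T (x n)‖
            + ‖T‖ ^ (2 * k) * (‖T‖ * ‖T (T (x n)) - (‖T‖ ^ 2 : ℝ) • x n‖) := by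
            gcongr
            · calc ‖(T ^ 2) _‖ ≤ ‖T ^ 2‖ * _ := (T ^ 2).le_opNorm _
                _ ≤ ‖T‖ ^ 2 * _ := by
                    gcongr
                    exact norm_pow_le' T (by norm_num)
            · rw [norm_smul]
              gcongr
              · simp [abs_of_nonneg (pow_nonneg (norm_nonneg T) _)]
              · exact T.le_opNorm _
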